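/- (Margulis' theorem for group actions, part (b)) Let (b,c) be a connected graph over X with a nilpotent group G acting cocompactly on X such that H_{b,c} is G-invariant, and fix x₀ ∈ X. Then every harmonic extreme point of the convex set 𝓚 is G-multiplicative. -/

import Mathlib

open MeasureTheory
open scoped BigOperators

noncomputable section

namespace GraphPaper

variable {X : Type*}

/-- The Schrödinger operator `H_{b,c}` of a graph `(b,c)` over `X`. -/
def schrodinger (b : X → X → ℝ) (c : X → ℝ) (f : X → ℝ) : X → ℝ :=
  fun x => (∑' y, b x y * (f x - f y)) + c x * f x

/-- Membership of `f` in the domain of `H_{b,c}`. -/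
def InDom (b : X → X → ℝ) (f : X → ℝ) : Prop :=
  ∀ x, Summable fun y => b x y * |f y|

/-- The graph `b` is connected: any two points are joined by a path of positive weights. -/
def Connected (b : X → X → ℝ) : Prop :=
  ∀ x y : X, Relation.ReflTransGen (fun u v => 0 < b u v) x y

/-- The degree `deg(x) = ∑_y b(x,y) + c(x)`. -/
def deg (b : X → X → ℝ) (c : X → ℝ) (x : X) : ℝ :=
  (∑' y, b x y) + c x

variable {G : Type*} [Group G] [MulAction G X]

/-- The shift `T_g f (x) = f (g⁻¹ x)`. -/
def shift (g : G) (f : X → ℝ) : X → ℝ := fun x => f (g⁻¹ • x)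

/-- `H_{b,c}` is invariant under the shifts by elements of a set `R ⊆ G`. -/
def HInvOn (b : X → X → ℝ) (c : X → ℝ) (R : Set G) : Prop :=
  ∀ g ∈ R, ∀ f : X → ℝ, InDom b f →
    InDom b (shift g f) ∧ schrodinger b c (shift g f) = shift g (schrodinger b c f)

/-- The action of `G` on `X` is cocompact: there is a finite `V` with `G V = X`. -/
def CocompactAction (G X : Type*) [Group G] [MulAction G X] : Prop :=
  ∃ V : Finset X, ∀ x : X, ∃ g : G, ∃ v ∈ V, x = g • v

/-- The set `𝓗⁺` of nonnegative, not identically zero, harmonic functions. -/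
def Hplus (b : X → X → ℝ) (c : X → ℝ) : Set (X → ℝ) :=
  {f | InDom b f ∧ schrodinger b c f = 0 ∧ (∀ x, 0 ≤ f x) ∧ f ≠ 0}

/-- The set `𝓚`: the closure of the normalized positive harmonic functions. -/
def Kset (b : X → X → ℝ) (c : X → ℝ) (x₀ : X) : Set (X → ℝ) :=
  closure {f : X → ℝ | f ∈ Hplus b c ∧ f x₀ = 1}

/-- The set `𝓚^R` of `R`-invariant elements of `𝓚`. -/
def KsetR (b : X → X → ℝ) (c : X → ℝ) (x₀ : X) (R : Set G) : Set (X → ℝ) :=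
  {f ∈ Kset b c x₀ | ∀ g ∈ R, shift g f = f}

/-- `f` is `G`-multiplicative with a character `γ ∈ Hom(G, ℝ_{>0})`. -/
def IsMultiplicative (G : Type*) [Group G] [MulAction G X] (f : X → ℝ) : Prop :=
  ∃ γ : G →* ℝ, (∀ g, 0 < γ g) ∧ ∀ g : G, shift g f = γ g⁻¹ • f

/-- `Q(R) = π⁻¹(Z(G/R))`, the preimage of the centre of `G/R`. -/
def Qsub (R : Subgroup G) [R.Normal] : Subgroup G :=
  (Subgroup.center (G ⧸ R)).comap (QuotientGroup.mk' R)

/-- The set `𝓜` of multiplicative elements of `𝓚`. -/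
def Mset (G : Type*) [Group G] [MulAction G X] (b : X → X → ℝ) (c : X → ℝ) (x₀ : X) :
    Set (X → ℝ) :=
  {f ∈ Kset b c x₀ | IsMultiplicative G f}

/-- The set `𝓚_λ` for the graph `(b, c - λ)`, i.e. for `λ`-harmonic functions. -/
def KsetLam (b : X → X → ℝ) (c : X → ℝ) (x₀ : X) (l : ℝ) : Set (X → ℝ) :=
  closure {f : X → ℝ | InDom b f ∧ (schrodinger b c f = fun x => l * f x) ∧
    (∀ x, 0 ≤ f x) ∧ f ≠ 0 ∧ f x₀ = 1}

/-- The set `𝓜_λ` of multiplicative elements of `𝓚_λ`. -/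
def MsetLam (G : Type*) [Group G] [MulAction G X] (b : X → X → ℝ) (c : X → ℝ) (x₀ : X)
    (l : ℝ) : Set (X → ℝ) :=
  {f ∈ KsetLam b c x₀ l | IsMultiplicative G f}


/-! Auxiliary lemmas for the proof of `extremePoint_multiplicative`. -/

section AuxLemmas

variable {X : Type*} {G : Type*} [Group G] [MulAction G X]

/-- A convenient class of functions: nonnegative harmonic functions in the domain. -/
def GoodFn (b : X → X → ℝ) (c : X → ℝ) (f : X → ℝ) : Prop :=
  InDom b f ∧ schrodinger b c f = 0 ∧ ∀ x, 0 ≤ f x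

lemma shift_mul' (g h : G) (f : X → ℝ) : shift (g * h) f = shift g (shift h f) := by
  funext x
  simp [shift, mul_smul, mul_inv_rev]

lemma shift_one' (f : X → ℝ) : shift (1 : G) f = f := by
  funext x; simp [shift]

lemma summable_bf {b : X → X → ℝ} (hb0 : ∀ x y, 0 ≤ b x y) {f : X → ℝ}
    (hdom : InDom b f) (x : X) : Summable fun y => b x y * f y := by
  have h : (fun y => |b x y * f y|) = fun y => b x y * |f y| := by
    funext y; rw [abs_mul, abs_of_nonneg (hb0 x y)]
  exact Summable.of_abs (h ▸ hdom x)

lemma harmonic_sum {b : X → X → ℝ} {c : X → ℝ} (hb0 : ∀ x y, 0 ≤ b x y)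
    (hbs : ∀ x, Summable (b x)) {f : X → ℝ} (hdom : InDom b f)
    (hharm : schrodinger b c f = 0) (x : X) :
    ∑' y, b x y * f y = deg b c x * f x := by
  have h1 : Summable fun y => b x y * f x := (hbs x).mul_right _
  have h2 : Summable fun y => b x y * f y := summable_bf hb0 hdom x
  have h0 : (∑' y, b x y * (f x - f y)) + c x * f x = 0 := by
    have := congrFun hharm x
    simpa [schrodinger] using this
  have hsplit : (∑' y, b x y * (f x - f y))
      = (∑' y, b x y) * f x - ∑' y, b x y * f y := by
    calc (∑' y, b x y * (f x - f y)) = ∑' y, (b x y * f x - b x y * f y) := by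
          congr 1; funext y; ring
      _ = (∑' y, b x y * f x) - ∑' y, b x y * f y := Summable.tsum_sub h1 h2
      _ = (∑' y, b x y) * f x - ∑' y, b x y * f y := by rw [tsum_mul_right]
  rw [hsplit] at h0
  have hd : deg b c x * f x = (∑' y, b x y) * f x + c x * f x := by
    simp only [deg]; ring
  rw [hd]; linarith

lemma edge_harnack {b : X → X → ℝ} {c : X → ℝ} (hb0 : ∀ x y, 0 ≤ b x y)
    (hbs : ∀ x, Summable (b x)) {u w : X} (huw : 0 < b u w) :
    ∃ C : ℝ, 0 < C ∧ ∀ f : X → ℝ, GoodFn b c f → f w ≤ C * f u := by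
  refine ⟨max (deg b c u / b u w) 1, lt_of_lt_of_le one_pos (le_max_right _ _), ?_⟩
  rintro f ⟨hdom, hharm, hpos⟩
  have hsum := harmonic_sum hb0 hbs hdom hharm u
  have hle : b u w * f w ≤ deg b c u * f u := by
    rw [← hsum]
    exact Summable.le_tsum (summable_bf hb0 hdom u) w (fun y _ => mul_nonneg (hb0 u y) (hpos y))
  rcases le_or_gt (deg b c u) 0 with hdeg | hdeg
  · have hfw : f w = 0 := by
      have h1 : deg b c u * f u ≤ 0 := mul_nonpos_of_nonpos_of_nonneg hdeg (hpos u)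
      nlinarith [hpos w]
    rw [hfw]
    have : (0:ℝ) < max (deg b c u / b u w) 1 := lt_of_lt_of_le one_pos (le_max_right _ _)
    nlinarith [hpos u]
  · have h2 : f w ≤ (deg b c u / b u w) * f u := by
      rw [div_mul_eq_mul_div, le_div_iff₀ huw]
      nlinarith
    exact h2.trans (mul_le_mul_of_nonneg_right (le_max_left _ _) (hpos u))

lemma path_harnack {b : X → X → ℝ} {c : X → ℝ} (hb0 : ∀ x y, 0 ≤ b x y)
    (hbs : ∀ x, Summable (b x)) {u w : X}
    (hp : Relation.ReflTransGen (fun p q => 0 < b p q) u w) :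
    ∃ C : ℝ, 0 < C ∧ ∀ f : X → ℝ, GoodFn b c f → f w ≤ C * f u := by
  induction hp with
  | refl => exact ⟨1, one_pos, fun f _ => by simp⟩
  | @tail m w _ hedge ih =>
      obtain ⟨C1, hC1, h1⟩ := ih
      obtain ⟨C2, hC2, h2⟩ := edge_harnack hb0 hbs hedge
      refine ⟨C2 * C1, mul_pos hC2 hC1, fun f hf => ?_⟩
      calc f w ≤ C2 * f m := h2 f hf
        _ ≤ C2 * (C1 * f u) := mul_le_mul_of_nonneg_left (h1 f hf) hC2.le
        _ = C2 * C1 * f u := by ring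

lemma zero_step {b : X → X → ℝ} {c : X → ℝ} (hb0 : ∀ x y, 0 ≤ b x y)
    (hbs : ∀ x, Summable (b x)) {f : X → ℝ} (hf : GoodFn b c f) {u w : X}
    (huw : 0 < b u w) (h0 : f u = 0) : f w = 0 := by
  have hsum := harmonic_sum hb0 hbs hf.1 hf.2.1 u
  have hle : b u w * f w ≤ deg b c u * f u := by
    rw [← hsum]
    exact Summable.le_tsum (summable_bf hb0 hf.1 u) w (fun y _ => mul_nonneg (hb0 u y) (hf.2.2 y))
  rw [h0, mul_zero] at hle
  nlinarith [hf.2.2 w]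

lemma zero_prop {b : X → X → ℝ} {c : X → ℝ} (hb0 : ∀ x y, 0 ≤ b x y)
    (hbs : ∀ x, Summable (b x)) {f : X → ℝ} (hf : GoodFn b c f) {u w : X}
    (hp : Relation.ReflTransGen (fun p q => 0 < b p q) u w) (h0 : f u = 0) : f w = 0 := by
  induction hp with
  | refl => exact h0
  | @tail m w _ hedge ih => exact zero_step hb0 hbs hf hedge ih

lemma schrodinger_const_mul (b : X → X → ℝ) (c : X → ℝ) (f : X → ℝ) (a : ℝ) :
    schrodinger b c (fun x => a * f x) = fun x => a * schrodinger b c f x := by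
  funext x
  show (∑' y, b x y * (a * f x - a * f y)) + c x * (a * f x)
      = a * ((∑' y, b x y * (f x - f y)) + c x * f x)
  have h : (fun y => b x y * (a * f x - a * f y)) = fun y => a * (b x y * (f x - f y)) := by
    funext y; ring
  rw [h, tsum_mul_left]; ring

lemma shift_apply_const {k : X → ℝ} {g : G} {cg : ℝ}
    (h : shift g k = fun x => cg * k x) (z : X) : k (g⁻¹ • z) = cg * k z :=
  congrFun h z

lemma shift_mul_const {k : X → ℝ} {A B : G} {dA dB : ℝ}
    (hA : shift A k = fun x => dA * k x) (hB : shift B k = fun x => dB * k x) :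
    shift (A * B) k = fun x => (dA * dB) * k x := by
  funext z
  show k ((A * B)⁻¹ • z) = dA * dB * k z
  rw [mul_inv_rev, mul_smul, shift_apply_const hB, shift_apply_const hA]; ring

lemma shift_inv_const {k : X → ℝ} {g : G} {cg : ℝ} (hc : cg ≠ 0)
    (h : shift g k = fun x => cg * k x) : shift g⁻¹ k = fun x => cg⁻¹ * k x := by
  funext z
  show k (g⁻¹⁻¹ • z) = cg⁻¹ * k z
  rw [inv_inv]
  have h2 := shift_apply_const h (g • z)
  rw [inv_smul_smul] at h2
  rw [h2, inv_mul_cancel_left₀ hc]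

lemma le_one_of_sq_pow_le {c M : ℝ} (hc : 0 < c) (hM : 0 < M)
    (h : ∀ n : ℕ, c ^ (n * n) ≤ M ^ n) : c ≤ 1 := by
  by_contra hlt
  push_neg at hlt
  obtain ⟨n, hn⟩ := pow_unbounded_of_one_lt M hlt
  rcases Nat.eq_zero_or_pos n with rfl | hn0
  · have h1 := h 1
    simp only [pow_zero] at hn
    simp only [mul_one, pow_one] at h1
    linarith
  · have h1 : M ^ n < (c ^ n) ^ n := pow_lt_pow_left₀ hn hM.le hn0.ne'
    rw [← pow_mul] at h1
    exact absurd (h n) (not_le.2 h1)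

lemma comm_inv_eq (P Q : G) : (P * Q * P⁻¹ * Q⁻¹)⁻¹ = Q * P * Q⁻¹ * P⁻¹ := by group

lemma comm_inv_mul_eq (P Q : G) : (P * Q * P⁻¹ * Q⁻¹)⁻¹ * P = Q * P * Q⁻¹ := by group

end AuxLemmas
/-- **Margulis' theorem for group actions, part (b).**
Every harmonic extreme point of `𝓚` is `G`-multiplicative. -/
theorem extremePoint_multiplicative {X : Type*} [Countable X] {G : Type*} [Group G]
    [MulAction G X] [Group.IsNilpotent G]
    (b : X → X → ℝ) (c : X → ℝ)
    (hb0 : ∀ x y, 0 ≤ b x y) (hbd : ∀ x, b x x = 0) (hbs : ∀ x, Summable (b x))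
    (hconn : Connected b) (hcocpt : CocompactAction G X)
    (hH : HInvOn b c (Set.univ : Set G)) (x₀ : X)
    (k : X → ℝ) (hk : k ∈ Set.extremePoints ℝ (Kset b c x₀))
    (hdom : InDom b k) (hharm : schrodinger b c k = 0) :
    IsMultiplicative G k := by
  classical
  obtain ⟨kKset, kext⟩ := hk
  -- Basic facts about `k`.
  have knn : ∀ x, 0 ≤ k x := by
    have hcl : Kset b c x₀ ⊆ {f : X → ℝ | ∀ x, 0 ≤ f x} := by
      apply closure_minimal
      · rintro f ⟨⟨_, _, hf, _⟩, _⟩; exact hf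
      · have he : {f : X → ℝ | ∀ x, 0 ≤ f x} = ⋂ x, {f : X → ℝ | 0 ≤ f x} := by
          ext f; simp [Set.mem_iInter]
        rw [he]
        exact isClosed_iInter fun x => isClosed_le continuous_const (continuous_apply x)
    exact hcl kKset
  have kx0 : k x₀ = 1 := by
    have hcl : Kset b c x₀ ⊆ {f : X → ℝ | f x₀ = 1} :=
      closure_minimal (fun f hf => hf.2) (isClosed_eq (continuous_apply x₀) continuous_const)
    exact hcl kKset
  have hGoodk : GoodFn b c k := ⟨hdom, hharm, knn⟩
  have kpos : ∀ x, 0 < k x := by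
    intro x
    rcases (knn x).lt_or_eq with h | h
    · exact h
    · exfalso
      have h0 := zero_prop hb0 hbs hGoodk (hconn x x₀) h.symm
      rw [kx0] at h0; norm_num at h0
  -- Shifts of good functions are good.
  have good_shift : ∀ (g : G) (f : X → ℝ), GoodFn b c f → GoodFn b c (shift g f) := by
    rintro g f ⟨h1, h2, h3⟩
    obtain ⟨hd, hs⟩ := hH g (Set.mem_univ g) f h1
    refine ⟨hd, ?_, fun x => h3 _⟩
    rw [hs, h2]
    funext x; simp [shift]
  -- Uniform (translation-invariant) Harnack inequality for `k`.
  have UH : ∀ p q : X, ∃ C : ℝ, 0 < C ∧ ∀ h : G, k (h • q) ≤ C * k (h • p) := by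
    intro p q
    obtain ⟨C, hC, hCf⟩ := path_harnack hb0 hbs (hconn p q)
    refine ⟨C, hC, fun h => ?_⟩
    have h2 := hCf (shift h⁻¹ k) (good_shift h⁻¹ k hGoodk)
    simpa [shift] using h2
  -- Growth bounds along powers.
  have P1 : ∀ t : G, ∃ C : ℝ, 0 < C ∧
      ∀ (g : G) (n : ℕ), k ((g * t ^ n) • x₀) ≤ C ^ n * k (g • x₀) := by
    intro t
    obtain ⟨C, hC, hCf⟩ := UH x₀ (t • x₀)
    refine ⟨C, hC, fun g n => ?_⟩
    induction n with
    | zero => simp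
    | succ n ih =>
        calc k ((g * t ^ (n + 1)) • x₀)
            = k ((g * t ^ n) • (t • x₀)) := by rw [pow_succ, ← mul_assoc, mul_smul]
          _ ≤ C * k ((g * t ^ n) • x₀) := hCf _
          _ ≤ C * (C ^ n * k (g • x₀)) := mul_le_mul_of_nonneg_left ih hC.le
          _ = C ^ (n + 1) * k (g • x₀) := by ring
  have P2 : ∀ t : G, ∃ C : ℝ, 0 < C ∧
      ∀ (g : G) (n : ℕ), k (g • x₀) ≤ C ^ n * k ((g * t ^ n) • x₀) := by
    intro t
    obtain ⟨C, hC, hCf⟩ := UH (t • x₀) x₀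
    refine ⟨C, hC, fun g n => ?_⟩
    induction n with
    | zero => simp
    | succ n ih =>
        calc k (g • x₀) ≤ C ^ n * k ((g * t ^ n) • x₀) := ih
          _ ≤ C ^ n * (C * k ((g * t ^ n) • (t • x₀))) :=
              mul_le_mul_of_nonneg_left (hCf _) (pow_nonneg hC.le n)
          _ = C ^ (n + 1) * k ((g * t ^ (n + 1)) • x₀) := by
              have he : (g * t ^ (n + 1)) • x₀ = (g * t ^ n) • (t • x₀) := by
                rw [pow_succ, ← mul_assoc, mul_smul]
              rw [he]; ring
  -- Minimality of `k` (from extremality).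
  have minimal : ∀ ψ : X → ℝ, InDom b ψ → schrodinger b c ψ = 0 → (∀ x, 0 ≤ ψ x) →
      (∀ x, ψ x ≤ k x) → ψ = fun x => ψ x₀ * k x := by
    intro ψ h1 h2 h3 h4
    have ht0 : 0 ≤ ψ x₀ := h3 x₀
    have ht1 : ψ x₀ ≤ 1 := by
      have := h4 x₀; rwa [kx0] at this
    -- the difference is also a good function
    have hdomδ : InDom b (fun x => k x - ψ x) := by
      intro x
      refine Summable.of_nonneg_of_le (fun y => mul_nonneg (hb0 x y) (abs_nonneg _))
        (fun y => ?_) ((hdom x).add (h1 x))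
      have habs : |k y - ψ y| ≤ |k y| + |ψ y| := abs_sub _ _
      nlinarith [hb0 x y, abs_nonneg (k y - ψ y)]
    have hharmδ : schrodinger b c (fun x => k x - ψ x) = 0 := by
      funext x
      have hk' := harmonic_sum hb0 hbs hdom hharm x
      have hψ' := harmonic_sum hb0 hbs h1 h2 x
      have hs1 : Summable fun y => b x y * k y := summable_bf hb0 hdom x
      have hs2 : Summable fun y => b x y * ψ y := summable_bf hb0 h1 x
      have hs0 : Summable fun y => b x y * (k x - ψ x) := (hbs x).mul_right _
      show (∑' y, b x y * ((k x - ψ x) - (k y - ψ y))) + c x * (k x - ψ x) = 0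
      have hsplit : (fun y => b x y * ((k x - ψ x) - (k y - ψ y)))
          = fun y => b x y * (k x - ψ x) - (b x y * k y - b x y * ψ y) := by
        funext y; ring
      rw [hsplit, Summable.tsum_sub hs0 (hs1.sub hs2), Summable.tsum_sub hs1 hs2, tsum_mul_right,
        hk', hψ']
      simp only [deg]
      ring
    have hδnn : ∀ x, 0 ≤ k x - ψ x := fun x => sub_nonneg.2 (h4 x)
    rcases eq_or_lt_of_le ht0 with h0 | h0
    · -- ψ x₀ = 0, hence ψ ≡ 0
      funext x
      have hz := zero_prop hb0 hbs ⟨h1, h2, h3⟩ (hconn x₀ x) h0.symm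
      rw [hz, ← h0, zero_mul]
    rcases eq_or_lt_of_le ht1 with h1' | h1'
    · -- ψ x₀ = 1, hence ψ ≡ k
      funext x
      have hz := zero_prop hb0 hbs ⟨hdomδ, hharmδ, hδnn⟩ (hconn x₀ x)
        (by rw [kx0, h1', sub_self])
      have : ψ x = k x := by linarith [hz]
      rw [this, h1', one_mul]
    · -- 0 < ψ x₀ < 1 : use extremality
      set t := ψ x₀ with htdef
      have htne : t ≠ 0 := ne_of_gt h0
      have ht1ne : 1 - t ≠ 0 := by intro hh; apply absurd h1'; simp; linarith
      set f₁ : X → ℝ := fun x => t⁻¹ * ψ x with hf₁def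
      set f₂ : X → ℝ := fun x => (1 - t)⁻¹ * (k x - ψ x) with hf₂def
      have hf₁x₀ : f₁ x₀ = 1 := by
        rw [hf₁def]; exact inv_mul_cancel₀ htne
      have hf₂x₀ : f₂ x₀ = 1 := by
        rw [hf₂def]; simp only [kx0, ← htdef]; exact inv_mul_cancel₀ ht1ne
      have hf₁mem : f₁ ∈ {f : X → ℝ | f ∈ Hplus b c ∧ f x₀ = 1} := by
        refine ⟨⟨?_, ?_, ?_, ?_⟩, hf₁x₀⟩
        · intro x
          refine Summable.congr ((h1 x).mul_left t⁻¹) fun y => ?_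
          rw [hf₁def, abs_mul, abs_of_nonneg (inv_nonneg.2 ht0)]; ring
        · rw [hf₁def, schrodinger_const_mul, h2]
          funext x; simp
        · intro x; exact mul_nonneg (inv_nonneg.2 ht0) (h3 x)
        · intro hh; rw [hh] at hf₁x₀; simpa using hf₁x₀
      have hf₂mem : f₂ ∈ {f : X → ℝ | f ∈ Hplus b c ∧ f x₀ = 1} := by
        have h1t : (0:ℝ) ≤ (1 - t)⁻¹ := inv_nonneg.2 (by linarith)
        refine ⟨⟨?_, ?_, ?_, ?_⟩, hf₂x₀⟩
        · intro x
          refine Summable.congr ((hdomδ x).mul_left (1 - t)⁻¹) fun y => ?_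
          rw [hf₂def, abs_mul, abs_of_nonneg h1t]; ring
        · rw [hf₂def, schrodinger_const_mul, hharmδ]
          funext x; simp
        · intro x; exact mul_nonneg h1t (hδnn x)
        · intro hh; rw [hh] at hf₂x₀; simpa using hf₂x₀
      have hseg : k ∈ openSegment ℝ f₁ f₂ := by
        refine ⟨t, 1 - t, h0, by linarith, by ring, ?_⟩
        funext x
        simp only [Pi.add_apply, Pi.smul_apply, smul_eq_mul, hf₁def, hf₂def]
        field_simp
        ring
      have hext := kext (subset_closure hf₁mem) (subset_closure hf₂mem) hseg
      funext x
      have h5 : t⁻¹ * ψ x = k x := congrFun hext x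
      show ψ x = t * k x
      calc ψ x = t * (t⁻¹ * ψ x) := by field_simp
        _ = t * k x := by rw [h5]
  -- Step lemma: if `k` is invariant under `L_{j+1}`, every `g ∈ L_j` is multiplicative.
  have C1 : ∀ j : ℕ, (∀ r ∈ (⊤ : Subgroup G).lowerCentralSeries (j + 1), shift r k = k) →
      ∀ g ∈ (⊤ : Subgroup G).lowerCentralSeries j, ∃ cg : ℝ, 0 < cg ∧ shift g k = fun x => cg * k x := by
    intro j hA g hg
    obtain ⟨V, hV⟩ := hcocpt
    have hVne : V.Nonempty := by
      obtain ⟨h, v, hv, _⟩ := hV x₀; exact ⟨v, hv⟩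
    have hCv : ∀ v : X, ∃ C : ℝ, 0 < C ∧ ∀ h : G, k (h • (g⁻¹ • v)) ≤ C * k (h • v) :=
      fun v => UH v (g⁻¹ • v)
    choose Cf hCf0 hCf using hCv
    set C := V.sup' hVne Cf with hCdef
    have hCpos : 0 < C :=
      lt_of_lt_of_le (hCf0 hVne.choose) (Finset.le_sup' Cf hVne.choose_spec)
    have hbound : ∀ x : X, k (g⁻¹ • x) ≤ C * k x := by
      intro x
      obtain ⟨h, v, hv, rfl⟩ := hV x
      have hr : g⁻¹ * h * g * h⁻¹ ∈ (⊤ : Subgroup G).lowerCentralSeries (j + 1) := by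
        rw [lowerCentralSeries_succ]
        exact Subgroup.subset_closure
          ⟨g⁻¹, Subgroup.inv_mem _ hg, h, Subgroup.mem_top h, by group⟩
      have hrk : ∀ z : X, k ((g⁻¹ * h * g * h⁻¹) • z) = k z := by
        intro z
        have h2 := congrFun (hA _ (Subgroup.inv_mem _ hr)) z
        simpa [shift] using h2
      calc k (g⁻¹ • h • v) = k ((g⁻¹ * h) • v) := by rw [mul_smul]
        _ = k (((g⁻¹ * h * g * h⁻¹) * (h * g⁻¹)) • v) := by
            rw [show (g⁻¹ * h * g * h⁻¹) * (h * g⁻¹) = g⁻¹ * h by group]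
        _ = k ((g⁻¹ * h * g * h⁻¹) • ((h * g⁻¹) • v)) := by rw [mul_smul]
        _ = k ((h * g⁻¹) • v) := hrk _
        _ = k (h • (g⁻¹ • v)) := by rw [mul_smul]
        _ ≤ Cf v * k (h • v) := hCf v h
        _ ≤ C * k (h • v) :=
            mul_le_mul_of_nonneg_right (Finset.le_sup' Cf hv) (knn _)
    have hgood : GoodFn b c (shift g k) := good_shift g k hGoodk
    set ψ : X → ℝ := fun x => C⁻¹ * k (g⁻¹ • x) with hψdef
    have hψeq : ψ = fun x => C⁻¹ * (shift g k) x := rfl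
    have hψdom : InDom b ψ := by
      intro x
      refine Summable.congr ((hgood.1 x).mul_left C⁻¹) fun y => ?_
      show C⁻¹ * (b x y * |k (g⁻¹ • y)|) = b x y * |C⁻¹ * k (g⁻¹ • y)|
      rw [abs_mul, abs_of_nonneg (inv_nonneg.2 hCpos.le)]; ring
    have hψharm : schrodinger b c ψ = 0 := by
      rw [hψeq, schrodinger_const_mul, hgood.2.1]
      funext x; simp
    have hψnn : ∀ x, 0 ≤ ψ x := fun x => mul_nonneg (inv_nonneg.2 hCpos.le) (knn _)
    have hψle : ∀ x, ψ x ≤ k x := by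
      intro x
      have hb := hbound x
      have h2 : C⁻¹ * k (g⁻¹ • x) ≤ C⁻¹ * (C * k x) :=
        mul_le_mul_of_nonneg_left hb (inv_nonneg.2 hCpos.le)
      rw [inv_mul_cancel_left₀ hCpos.ne'] at h2
      exact h2
    have hmin := minimal ψ hψdom hψharm hψnn hψle
    have hψ0 : 0 < ψ x₀ := mul_pos (inv_pos.2 hCpos) (kpos _)
    refine ⟨C * ψ x₀, mul_pos hCpos hψ0, ?_⟩
    funext x
    show k (g⁻¹ • x) = (C * ψ x₀) * k x
    have h1 : ψ x = ψ x₀ * k x := congrFun hmin x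
    have h2 : k (g⁻¹ • x) = C * ψ x := by
      rw [hψdef]
      show k (g⁻¹ • x) = C * (C⁻¹ * k (g⁻¹ • x))
      rw [mul_inv_cancel_left₀ hCpos.ne']
    rw [h2, h1]; ring
  -- Step lemma: multiplicative constants on `L_{j+1}` are trivial.
  have C2 : ∀ j : ℕ, (∀ r ∈ (⊤ : Subgroup G).lowerCentralSeries (j + 2), shift r k = k) →
      (∀ g ∈ (⊤ : Subgroup G).lowerCentralSeries (j + 1), ∃ cg : ℝ, 0 < cg ∧ shift g k = fun x => cg * k x) →
      ∀ g ∈ (⊤ : Subgroup G).lowerCentralSeries (j + 1), shift g k = k := by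
    intro j hA hB
    have hmemj : ∀ p, p ∈ (⊤ : Subgroup G).lowerCentralSeries j → ∀ q : G,
        p * q * p⁻¹ * q⁻¹ ∈ (⊤ : Subgroup G).lowerCentralSeries (j + 1) := by
      intro p hp q
      rw [lowerCentralSeries_succ]
      exact Subgroup.subset_closure ⟨p, hp, q, Subgroup.mem_top q, rfl⟩
    have conj_const : ∀ (a w : G), w ∈ (⊤ : Subgroup G).lowerCentralSeries (j + 1) → ∀ cw : ℝ,
        shift w k = (fun x => cw * k x) → shift (a * w * a⁻¹) k = fun x => cw * k x := by
      intro a w hw cw hwc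
      have hz : w⁻¹ * a * w * a⁻¹ ∈ (⊤ : Subgroup G).lowerCentralSeries (j + 1 + 1) := by
        rw [lowerCentralSeries_succ]
        exact Subgroup.subset_closure
          ⟨w⁻¹, Subgroup.inv_mem _ hw, a, Subgroup.mem_top a, by group⟩
      have hzk : shift (w⁻¹ * a * w * a⁻¹) k = k := hA _ hz
      have hid : a * w * a⁻¹ = w * (w⁻¹ * a * w * a⁻¹) := by group
      rw [hid, shift_mul', hzk, hwc]
    have bound_gen : ∀ (p q : G) (e : ℝ), 0 < e →
        (∀ n : ℕ, shift (p ^ n * q ^ n * (p ^ n)⁻¹ * (q ^ n)⁻¹) k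
          = fun z => e ^ (n * n) * k z) →
        e ≤ 1 := by
      intro p q e he hser
      obtain ⟨Cp, hCp, hPp⟩ := P1 p
      obtain ⟨Cq, hCq, hPq⟩ := P1 q
      obtain ⟨Cq', hCq', hPq'⟩ := P1 q⁻¹
      obtain ⟨Dp, hDp, hQp⟩ := P2 p
      refine le_one_of_sq_pow_le he (show (0:ℝ) < Cq * Cp * Cq' * Dp by positivity) ?_
      intro n
      have hs := shift_apply_const (hser n) ((p ^ n) • x₀)
      have hpt : (p ^ n * q ^ n * (p ^ n)⁻¹ * (q ^ n)⁻¹)⁻¹ • ((p ^ n) • x₀)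
          = (q ^ n * p ^ n * (q ^ n)⁻¹) • x₀ := by
        rw [← mul_smul, comm_inv_mul_eq]
      rw [hpt] at hs
      have hnum : k ((q ^ n * p ^ n * (q ^ n)⁻¹) • x₀)
          ≤ Cq' ^ n * (Cp ^ n * (Cq ^ n * 1)) := by
        have e1 : k ((q ^ n * p ^ n * (q⁻¹) ^ n) • x₀)
            ≤ Cq' ^ n * k ((q ^ n * p ^ n) • x₀) := hPq' _ n
        rw [inv_pow] at e1
        refine e1.trans ?_
        have e2 : k ((q ^ n * p ^ n) • x₀) ≤ Cp ^ n * k ((q ^ n) • x₀) := hPp _ n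
        have e3 : k ((q ^ n) • x₀) ≤ Cq ^ n * k x₀ := by
          have := hPq 1 n; simpa using this
        rw [kx0] at e3
        calc Cq' ^ n * k ((q ^ n * p ^ n) • x₀)
            ≤ Cq' ^ n * (Cp ^ n * k ((q ^ n) • x₀)) :=
              mul_le_mul_of_nonneg_left e2 (pow_nonneg hCq'.le n)
          _ ≤ Cq' ^ n * (Cp ^ n * (Cq ^ n * 1)) := by
              refine mul_le_mul_of_nonneg_left ?_ (pow_nonneg hCq'.le n)
              exact mul_le_mul_of_nonneg_left e3 (pow_nonneg hCp.le n)
      have hden : (1 : ℝ) ≤ Dp ^ n * k ((p ^ n) • x₀) := by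
        have := hQp 1 n
        simpa [kx0] using this
      have hepos : 0 < e ^ (n * n) := pow_pos he _
      calc e ^ (n * n) = e ^ (n * n) * 1 := by ring
        _ ≤ e ^ (n * n) * (Dp ^ n * k ((p ^ n) • x₀)) :=
            mul_le_mul_of_nonneg_left hden hepos.le
        _ = Dp ^ n * (e ^ (n * n) * k ((p ^ n) • x₀)) := by ring
        _ = Dp ^ n * k ((q ^ n * p ^ n * (q ^ n)⁻¹) • x₀) := by rw [← hs]
        _ ≤ Dp ^ n * (Cq' ^ n * (Cp ^ n * (Cq ^ n * 1))) :=
            mul_le_mul_of_nonneg_left hnum (pow_nonneg hDp.le n)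
        _ = (Cq * Cp * Cq' * Dp) ^ n := by rw [mul_pow, mul_pow, mul_pow]; ring
    -- commutators have trivial constant
    have core : ∀ x, x ∈ (⊤ : Subgroup G).lowerCentralSeries j → ∀ y : G,
        shift (x * y * x⁻¹ * y⁻¹) k = k := by
      intro x hx y
      obtain ⟨cw, hcw, hw⟩ := hB _ (hmemj x hx y)
      suffices hc1 : cw = 1 by
        rw [hw]; funext z; rw [hc1, one_mul]
      have hyn : ∀ n : ℕ, shift (x * y ^ n * x⁻¹ * (y ^ n)⁻¹) k
          = fun z => cw ^ n * k z := by
        intro n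
        induction n with
        | zero =>
            rw [show x * y ^ 0 * x⁻¹ * (y ^ 0)⁻¹ = (1 : G) by group, shift_one']
            funext z; simp
        | succ n ih =>
            have hid : x * y ^ (n + 1) * x⁻¹ * (y ^ (n + 1))⁻¹
                = (x * y * x⁻¹ * y⁻¹)
                  * (y * (x * y ^ n * x⁻¹ * (y ^ n)⁻¹) * y⁻¹) := by
              have hgen : ∀ B : G, x * (y * B) * x⁻¹ * (y * B)⁻¹
                  = (x * y * x⁻¹ * y⁻¹) * (y * (x * B * x⁻¹ * B⁻¹) * y⁻¹) := by
                intro B; group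
              rw [pow_succ']
              exact hgen _
            rw [hid, shift_mul',
              conj_const y _ (hmemj x hx (y ^ n)) _ ih]
            funext z
            show cw ^ n * k ((x * y * x⁻¹ * y⁻¹)⁻¹ • z) = cw ^ (n + 1) * k z
            rw [shift_apply_const hw]; ring
      have hxn : ∀ (y' : G) (d : ℝ), shift (x * y' * x⁻¹ * y'⁻¹) k = (fun z => d * k z) →
          ∀ n : ℕ, shift (x ^ n * y' * (x ^ n)⁻¹ * y'⁻¹) k = fun z => d ^ n * k z := by
        intro y' d hd n
        induction n with
        | zero =>
            rw [show x ^ 0 * y' * (x ^ 0)⁻¹ * y'⁻¹ = (1 : G) by group, shift_one']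
            funext z; simp
        | succ n ih =>
            have hid : x ^ (n + 1) * y' * (x ^ (n + 1))⁻¹ * y'⁻¹
                = (x * (x ^ n * y' * (x ^ n)⁻¹ * y'⁻¹) * x⁻¹) * (x * y' * x⁻¹ * y'⁻¹) := by
              have hgen : ∀ A : G, (x * A) * y' * (x * A)⁻¹ * y'⁻¹
                  = (x * (A * y' * A⁻¹ * y'⁻¹) * x⁻¹) * (x * y' * x⁻¹ * y'⁻¹) := by
                intro A; group
              rw [pow_succ']
              exact hgen _
            rw [hid, shift_mul', hd]
            have hconj := conj_const x _ (hmemj _ (Subgroup.pow_mem _ hx n) y') _ ih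
            funext z
            show d * k ((x * (x ^ n * y' * (x ^ n)⁻¹ * y'⁻¹) * x⁻¹)⁻¹ • z)
              = d ^ (n + 1) * k z
            rw [shift_apply_const hconj]; ring
      have hser : ∀ n : ℕ, shift (x ^ n * y ^ n * (x ^ n)⁻¹ * (y ^ n)⁻¹) k
          = fun z => cw ^ (n * n) * k z := by
        intro n
        have h2 := hxn (y ^ n) (cw ^ n) (hyn n) n
        rw [← pow_mul] at h2
        exact h2
      have hser' : ∀ n : ℕ, shift (y ^ n * x ^ n * (y ^ n)⁻¹ * (x ^ n)⁻¹) k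
          = fun z => (cw⁻¹) ^ (n * n) * k z := by
        intro n
        have h2 := shift_inv_const (pow_ne_zero (n * n) hcw.ne') (hser n)
        rw [comm_inv_eq] at h2
        rw [inv_pow]
        exact h2
      have hle1 : cw ≤ 1 := bound_gen x y cw hcw hser
      have hle2 : cw⁻¹ ≤ 1 := bound_gen y x cw⁻¹ (inv_pos.2 hcw) hser'
      have hge1 : 1 ≤ cw := by
        have h3 := mul_le_mul_of_nonneg_left hle2 hcw.le
        rwa [mul_inv_cancel₀ hcw.ne', mul_one] at h3
      linarith
    -- closure induction
    intro g hg
    have hg' : g ∈ Subgroup.closure {x : G | ∃ p ∈ (⊤ : Subgroup G).lowerCentralSeries j,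
        ∃ q ∈ (⊤ : Subgroup G), p * q * p⁻¹ * q⁻¹ = x} :=
      (mem_lowerCentralSeries_succ_iff ⊤ j g).mp hg
    refine Subgroup.closure_induction ?_ ?_ ?_ ?_ hg'
    · rintro r ⟨p, hp, q, -, rfl⟩
      exact core p hp q
    · exact shift_one' k
    · intro r s _ _ hr hs
      rw [shift_mul', hs, hr]
    · intro r _ hr
      have h2 : shift (r⁻¹ * r) k = shift r⁻¹ (shift r k) := shift_mul' _ _ _
      rw [inv_mul_cancel, shift_one', hr] at h2
      exact h2.symm
  -- Downward induction along the lower central series.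
  obtain ⟨n₀, hn₀⟩ := nilpotent_iff_lowerCentralSeries.mp ‹Group.IsNilpotent G›
  have key : ∀ d j : ℕ, 1 ≤ j → n₀ ≤ j + d →
      ∀ r ∈ (⊤ : Subgroup G).lowerCentralSeries j, shift r k = k := by
    intro d
    induction d with
    | zero =>
        intro j _ hj r hr
        have hbot : (⊤ : Subgroup G).lowerCentralSeries j ≤ ⊥ := by
          rw [← hn₀]
          exact lowerCentralSeries_antitone ⊤ (by omega)
        have : r = 1 := by simpa [Subgroup.mem_bot] using hbot hr
        rw [this, shift_one']
    | succ d ih =>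
        intro j hj hjd
        rcases le_or_gt n₀ (j + d) with hle | hlt
        · exact ih j hj hle
        · have hA : ∀ r ∈ (⊤ : Subgroup G).lowerCentralSeries (j + 1), shift r k = k :=
            ih (j + 1) (by omega) (by omega)
          obtain ⟨j', rfl⟩ : ∃ j', j = j' + 1 := ⟨j - 1, by omega⟩
          exact C2 j' (by simpa using ih (j' + 2) (by omega) (by omega))
            (C1 (j' + 1) hA)
  have hA1 : ∀ r ∈ (⊤ : Subgroup G).lowerCentralSeries 1, shift r k = k :=
    key n₀ 1 le_rfl (by omega)
  have hM : ∀ g : G, ∃ cg : ℝ, 0 < cg ∧ shift g k = fun x => cg * k x := by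
    intro g
    exact C1 0 hA1 g (by rw [lowerCentralSeries_zero]; exact Subgroup.mem_top g)
  -- Assemble the character.
  have hshift : ∀ g : G, shift g k = fun x => k (g⁻¹ • x₀) * k x := by
    intro g
    obtain ⟨cg, hcg, hgc⟩ := hM g
    have : cg = k (g⁻¹ • x₀) := by
      have h1 := shift_apply_const hgc x₀
      rw [kx0, mul_one] at h1
      exact h1.symm
    rwa [this] at hgc
  have hmul : ∀ g h : G, k ((g * h) • x₀) = k (g • x₀) * k (h • x₀) := by
    intro g h
    have h1 := shift_apply_const (hshift g⁻¹) (h • x₀)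
    rw [inv_inv] at h1
    rw [mul_smul]
    exact h1
  refine ⟨{ toFun := fun g => k (g • x₀)
            map_one' := by simpa using kx0
            map_mul' := hmul }, fun g => kpos _, fun g => ?_⟩
  rw [hshift g]
  funext x
  simp [smul_eq_mul]
end GraphPaper
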